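/- Let 𝒰 be a nonprincipal ultrafilter on ℕ and *ℚ, *ℝ the corresponding ultrapowers. The standard part map restricted to bounded hyperrationals, st : *ℚ ∩ ᵇℝ → ℝ, is a surjective ring homomorphism with kernel *ℚ ∩ ⁱℝ; hence the quotient ring (*ℚ ∩ ᵇℝ)/(*ℚ ∩ ⁱℝ) is isomorphic to ℝ. -/

import Mathlib

open Filter

noncomputable def stdPart (𝒰 : Ultrafilter ℕ) (x : Germ (𝒰 : Filter ℕ) ℝ) : ℝ :=
  limUnder (𝒰 : Filter ℕ) (Quotient.out x)

theorem stdPart_eq (𝒰 : Ultrafilter ℕ) (f : ℕ → ℝ) (a : ℝ)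
    (h : Tendsto f (𝒰 : Filter ℕ) (nhds a)) :
    stdPart 𝒰 (↑f : Germ (𝒰 : Filter ℕ) ℝ) = a := by
  haveI : (𝒰 : Filter ℕ).NeBot := 𝒰.neBot
  have hout : (↑f : Germ (𝒰 : Filter ℕ) ℝ).out =ᶠ[(𝒰 : Filter ℕ)] f := by
    have h1 : Quotient.mk (germSetoid (𝒰 : Filter ℕ) ℝ) ((↑f : Germ (𝒰 : Filter ℕ) ℝ).out) =
        Quotient.mk (germSetoid (𝒰 : Filter ℕ) ℝ) f := Quotient.out_eq _
    exact Quotient.exact h1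
  have h' : Tendsto (↑f : Germ (𝒰 : Filter ℕ) ℝ).out (𝒰 : Filter ℕ) (nhds a) :=
    h.congr' hout.symm
  exact tendsto_nhds_unique (tendsto_nhds_limUnder ⟨a, h'⟩) h'

theorem tendsto_stdPart (𝒰 : Ultrafilter ℕ) (f : ℕ → ℝ) (m : ℝ)
    (hm : ∀ᶠ n in (𝒰 : Filter ℕ), |f n| ≤ m) :
    Tendsto f (𝒰 : Filter ℕ) (nhds (stdPart 𝒰 (↑f : Germ (𝒰 : Filter ℕ) ℝ))) := by
  have hmem : (Set.Icc (-m) m) ∈ (𝒰.map f : Filter ℝ) := by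
    rw [Ultrafilter.coe_map, mem_map]
    filter_upwards [hm] with n hn
    exact abs_le.mp hn
  obtain ⟨a, -, ha⟩ := (isCompact_Icc (a := -m) (b := m)).ultrafilter_le_nhds (𝒰.map f)
    (le_principal_iff.mpr hmem)
  have htend : Tendsto f (𝒰 : Filter ℕ) (nhds a) := by
    rwa [Ultrafilter.coe_map] at ha
  rwa [stdPart_eq 𝒰 f a htend]

/-- **Standard part on bounded hyperrationals.**  Let `𝒰` be a nonprincipal
ultrafilter on `ℕ` and `*ℝ = Germ 𝒰 ℝ`, `*ℚ ⊆ *ℝ` the corresponding ultrapowers.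
The subset `*ℚ ∩ ᵇℝ` of bounded hyperrationals is a subring of `*ℝ`, and the
standard part map `st : *ℚ ∩ ᵇℝ → ℝ` (sending each bounded hyperrational to the
unique real infinitely close to it) is a surjective ring homomorphism whose kernel
is the ideal `*ℚ ∩ ⁱℝ` of infinitesimal hyperrationals; hence the quotient ring
`(*ℚ ∩ ᵇℝ)/(*ℚ ∩ ⁱℝ)` is isomorphic to `ℝ`. -/
theorem standard_part_bounded_hyperrationals
    (𝒰 : Ultrafilter ℕ) (h𝒰 : ∀ a : ℕ, 𝒰 ≠ pure a) :
    ∃ S : Subring (Germ (𝒰 : Filter ℕ) ℝ),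
      ((S : Set (Germ (𝒰 : Filter ℕ) ℝ)) =
        {x | (∃ q : ℕ → ℚ, x = (↑(fun n => (q n : ℝ)) : Germ (𝒰 : Filter ℕ) ℝ)) ∧
          ∃ m : ℕ, x.LiftPred fun r : ℝ => |r| ≤ (m : ℝ)}) ∧
      ∃ st : S →+* ℝ,
        (∀ x : S, ∀ ε : ℝ, 0 < ε →
          Filter.Germ.LiftPred (fun r : ℝ => |r - st x| ≤ ε) (x : Germ (𝒰 : Filter ℕ) ℝ)) ∧
        Function.Surjective st ∧
        (∀ x : S, x ∈ RingHom.ker st ↔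
          ∀ ε : ℝ, 0 < ε →
            Filter.Germ.LiftPred (fun r : ℝ => |r| ≤ ε) (x : Germ (𝒰 : Filter ℕ) ℝ)) ∧
        Nonempty ((S ⧸ RingHom.ker st) ≃+* ℝ) := by
  classical
  haveI : (𝒰 : Filter ℕ).NeBot := 𝒰.neBot
  have hatTop : (𝒰 : Filter ℕ) ≤ atTop := by
    rcases 𝒰.le_cofinite_or_eq_pure with h | ⟨a, ha⟩
    · exact h.trans Nat.cofinite_eq_atTop.le
    · exact absurd ha (h𝒰 a)
  set A : Set (Germ (𝒰 : Filter ℕ) ℝ) :=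
    {x | (∃ q : ℕ → ℚ, x = (↑(fun n => (q n : ℝ)) : Germ (𝒰 : Filter ℕ) ℝ)) ∧
      ∃ m : ℕ, x.LiftPred fun r : ℝ => |r| ≤ (m : ℝ)} with hA
  have hone : (1 : Germ (𝒰 : Filter ℕ) ℝ) ∈ A := by
    refine ⟨⟨fun _ => 1, ?_⟩, 1, ?_⟩
    · rw [← Germ.coe_one]
      congr 1
      funext n
      norm_num
    · rw [← Germ.coe_one, Germ.liftPred_coe]
      filter_upwards with n; simp
  have hzero : (0 : Germ (𝒰 : Filter ℕ) ℝ) ∈ A := by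
    refine ⟨⟨fun _ => 0, ?_⟩, 0, ?_⟩
    · rw [← Germ.coe_zero]
      congr 1
      funext n
      norm_num
    · rw [← Germ.coe_zero, Germ.liftPred_coe]
      filter_upwards with n; simp
  have hmul : ∀ {x y : Germ (𝒰 : Filter ℕ) ℝ}, x ∈ A → y ∈ A → x * y ∈ A := by
    rintro x y ⟨⟨q, hq⟩, m, hm⟩ ⟨⟨q', hq'⟩, m', hm'⟩
    subst hq hq'
    rw [Germ.liftPred_coe] at hm hm'
    refine ⟨⟨fun n => q n * q' n, ?_⟩, m * m', ?_⟩
    · rw [← Germ.coe_mul]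
      congr 1; funext n; push_cast; rfl
    · rw [← Germ.coe_mul, Germ.liftPred_coe]
      filter_upwards [hm, hm'] with n h1 h2
      calc |((fun n => (q n : ℝ)) * fun n => (q' n : ℝ)) n| = |(q n : ℝ)| * |(q' n : ℝ)| := by
            simp [abs_mul]
        _ ≤ (m : ℝ) * (m' : ℝ) := mul_le_mul h1 h2 (abs_nonneg _) (Nat.cast_nonneg _)
        _ = ((m * m' : ℕ) : ℝ) := by push_cast; ring
  have hadd : ∀ {x y : Germ (𝒰 : Filter ℕ) ℝ}, x ∈ A → y ∈ A → x + y ∈ A := by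
    rintro x y ⟨⟨q, hq⟩, m, hm⟩ ⟨⟨q', hq'⟩, m', hm'⟩
    subst hq hq'
    rw [Germ.liftPred_coe] at hm hm'
    refine ⟨⟨fun n => q n + q' n, ?_⟩, m + m', ?_⟩
    · rw [← Germ.coe_add]
      congr 1; funext n; push_cast; rfl
    · rw [← Germ.coe_add, Germ.liftPred_coe]
      filter_upwards [hm, hm'] with n h1 h2
      calc |((fun n => (q n : ℝ)) + fun n => (q' n : ℝ)) n| ≤ |(q n : ℝ)| + |(q' n : ℝ)| :=
            abs_add_le _ _
        _ ≤ (m : ℝ) + (m' : ℝ) := add_le_add h1 h2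
        _ = ((m + m' : ℕ) : ℝ) := by push_cast; ring
  have hneg : ∀ {x : Germ (𝒰 : Filter ℕ) ℝ}, x ∈ A → -x ∈ A := by
    rintro x ⟨⟨q, hq⟩, m, hm⟩
    subst hq
    rw [Germ.liftPred_coe] at hm
    refine ⟨⟨fun n => -q n, ?_⟩, m, ?_⟩
    · rw [← Germ.coe_neg]
      congr 1; funext n; push_cast; rfl
    · rw [← Germ.coe_neg, Germ.liftPred_coe]
      filter_upwards [hm] with n h1
      simpa using h1
  set S : Subring (Germ (𝒰 : Filter ℕ) ℝ) :=
    { carrier := A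
      one_mem' := hone
      mul_mem' := hmul
      zero_mem' := hzero
      add_mem' := hadd
      neg_mem' := hneg } with hS
  refine ⟨S, rfl, ?_⟩
  -- every element of S has a representative converging to its standard part
  have rep : ∀ x : S, ∃ f : ℕ → ℝ, (x : Germ (𝒰 : Filter ℕ) ℝ) = ↑f ∧
      Tendsto f (𝒰 : Filter ℕ) (nhds (stdPart 𝒰 (x : Germ (𝒰 : Filter ℕ) ℝ))) := by
    intro x
    have hx : (x : Germ (𝒰 : Filter ℕ) ℝ) ∈ A := x.2
    obtain ⟨⟨q, hq⟩, m, hm⟩ := hx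
    refine ⟨fun n => (q n : ℝ), hq, ?_⟩
    rw [hq]
    refine tendsto_stdPart 𝒰 _ (m : ℝ) ?_
    rw [hq, Germ.liftPred_coe] at hm
    exact hm
  set st : S →+* ℝ :=
    { toFun := fun x => stdPart 𝒰 (x : Germ (𝒰 : Filter ℕ) ℝ)
      map_one' := by
        show stdPart 𝒰 (1 : Germ (𝒰 : Filter ℕ) ℝ) = 1
        rw [← Germ.coe_one]
        exact stdPart_eq 𝒰 _ 1 tendsto_const_nhds
      map_mul' := by
        intro x y
        obtain ⟨f, hf, hft⟩ := rep x
        obtain ⟨g, hg, hgt⟩ := rep y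
        show stdPart 𝒰 ((x : Germ (𝒰 : Filter ℕ) ℝ) * y) =
          stdPart 𝒰 (x : Germ (𝒰 : Filter ℕ) ℝ) * stdPart 𝒰 (y : Germ (𝒰 : Filter ℕ) ℝ)
        rw [hf] at hft ⊢
        rw [hg] at hgt ⊢
        rw [← Germ.coe_mul]
        exact stdPart_eq 𝒰 _ _ (hft.mul hgt)
      map_zero' := by
        show stdPart 𝒰 (0 : Germ (𝒰 : Filter ℕ) ℝ) = 0
        rw [← Germ.coe_zero]
        exact stdPart_eq 𝒰 _ 0 tendsto_const_nhds
      map_add' := by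
        intro x y
        obtain ⟨f, hf, hft⟩ := rep x
        obtain ⟨g, hg, hgt⟩ := rep y
        show stdPart 𝒰 ((x : Germ (𝒰 : Filter ℕ) ℝ) + y) =
          stdPart 𝒰 (x : Germ (𝒰 : Filter ℕ) ℝ) + stdPart 𝒰 (y : Germ (𝒰 : Filter ℕ) ℝ)
        rw [hf] at hft ⊢
        rw [hg] at hgt ⊢
        rw [← Germ.coe_add]
        exact stdPart_eq 𝒰 _ _ (hft.add hgt) } with hst
  have happrox : ∀ x : S, ∀ ε : ℝ, 0 < ε →
      Filter.Germ.LiftPred (fun r : ℝ => |r - st x| ≤ ε) (x : Germ (𝒰 : Filter ℕ) ℝ) := by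
    intro x ε hε
    obtain ⟨f, hf, hft⟩ := rep x
    have hst' : st x = stdPart 𝒰 (x : Germ (𝒰 : Filter ℕ) ℝ) := rfl
    rw [hf, Germ.liftPred_coe]
    have := hft (Metric.closedBall_mem_nhds (stdPart 𝒰 (x : Germ (𝒰 : Filter ℕ) ℝ)) hε)
    filter_upwards [this] with n hn
    rw [hst']
    simpa [Metric.mem_closedBall, Real.dist_eq] using hn
  have hsurj : Function.Surjective st := by
    intro r
    have hpos : ∀ n : ℕ, (0 : ℝ) < 1 / (n + 1) := fun n => by positivity
    choose q hq using fun n : ℕ => exists_rat_near (K := ℝ) r (hpos n)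
    have hbound : ∀ n : ℕ, |(q n : ℝ)| ≤ ((⌈|r|⌉₊ + 1 : ℕ) : ℝ) := by
      intro n
      have h1 : |(q n : ℝ)| - |r| ≤ |(q n : ℝ) - r| := abs_sub_abs_le_abs_sub _ _
      have h2 : |(q n : ℝ) - r| = |r - (q n : ℝ)| := abs_sub_comm _ _
      have h3 : |r - (q n : ℝ)| < 1 := lt_of_lt_of_le (hq n) (by
        rw [div_le_one (by positivity)]; linarith [Nat.cast_nonneg (α := ℝ) n])
      have h4 : |r| ≤ (⌈|r|⌉₊ : ℝ) := Nat.le_ceil _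
      push_cast
      linarith
    have htend : Tendsto (fun n => (q n : ℝ)) atTop (nhds r) := by
      rw [tendsto_iff_dist_tendsto_zero]
      refine squeeze_zero (fun n => dist_nonneg) (fun n => ?_)
        tendsto_one_div_add_atTop_nhds_zero_nat
      rw [Real.dist_eq, abs_sub_comm]
      exact (hq n).le
    have hmemA : (↑(fun n => (q n : ℝ)) : Germ (𝒰 : Filter ℕ) ℝ) ∈ A := by
      refine ⟨⟨q, rfl⟩, ⌈|r|⌉₊ + 1, ?_⟩
      rw [Germ.liftPred_coe]
      filter_upwards with n
      exact hbound n
    refine ⟨⟨(↑(fun n => (q n : ℝ)) : Germ (𝒰 : Filter ℕ) ℝ), hmemA⟩, ?_⟩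
    show stdPart 𝒰 (↑(fun n => (q n : ℝ)) : Germ (𝒰 : Filter ℕ) ℝ) = r
    exact stdPart_eq 𝒰 _ r (htend.mono_left hatTop)
  refine ⟨st, happrox, hsurj, ?_, ⟨RingHom.quotientKerEquivOfSurjective hsurj⟩⟩
  intro x
  rw [RingHom.mem_ker]
  constructor
  · intro hx ε hε
    have := happrox x ε hε
    obtain ⟨f, hf, -⟩ := rep x
    rw [hf, Germ.liftPred_coe] at this ⊢
    filter_upwards [this] with n hn
    rwa [hx, sub_zero] at hn
  · intro h
    obtain ⟨f, hf, hft⟩ := rep x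
    have htend0 : Tendsto f (𝒰 : Filter ℕ) (nhds 0) := by
      rw [Metric.tendsto_nhds]
      intro ε hε
      have := h (ε / 2) (by positivity)
      rw [hf, Germ.liftPred_coe] at this
      filter_upwards [this] with n hn
      rw [Real.dist_eq, sub_zero]
      linarith
    show stdPart 𝒰 (x : Germ (𝒰 : Filter ℕ) ℝ) = 0
    exact tendsto_nhds_unique hft htend0
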